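/- arXiv:1612.03319 — 3 statements merged into one kernel-verified Lean document; each statement's English description precedes it below -/
import Mathlib

section
/- If the hold time satisfies H > ε almost surely for all x (so F̄_τ(l|x) = 1 for l < ε), then conditioning the anytime distribution α on the event {L < ε} recovers the target: α(dx | L < ε) = π(dx). Explicitly, α(A × [0,ε)) / α(X × [0,ε)) = π(A) for all measurable A. -/
open MeasureTheory Set
open scoped ENNReal NNReal

/-- If the hold time satisfies `H > ε` almost surely for every `x` (so that the survival
function `F̄_τ(l|x) = 1` for `l < ε`), then conditioning the anytime distribution `α` on
the event `{L < ε}` recovers the target: `α(A × [0,ε)) / α(X × [0,ε)) = π(A)` for all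
measurable `A`. -/
theorem anytime_cond_small_lag_eq_target {X : Type*} [MeasurableSpace X]
    (π : Measure X) [IsProbabilityMeasure π]
    (τ : ProbabilityTheory.Kernel X ℝ) [ProbabilityTheory.IsMarkovKernel τ]
    (ε : ℝ) (hε : 0 < ε)
    (hsupp : ∀ x, τ x (Set.Iic ε) = 0)
    (EH : ℝ≥0∞)
    (hEH : EH = ∫⁻ x, (∫⁻ l in Set.Ici (0 : ℝ), τ x (Set.Ioi l)) ∂π)
    (hEH0 : EH ≠ 0) (hEHtop : EH ≠ ∞)
    (A : Set X) (hA : MeasurableSet A) :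
    (((π.prod (volume : Measure ℝ)).withDensity
        (fun p => (Set.Ici (0 : ℝ)).indicator (fun l => τ p.1 (Set.Ioi l) / EH) p.2))
        (A ×ˢ Set.Ico (0 : ℝ) ε))
      / (((π.prod (volume : Measure ℝ)).withDensity
        (fun p => (Set.Ici (0 : ℝ)).indicator (fun l => τ p.1 (Set.Ioi l) / EH) p.2))
        (Set.univ ×ˢ Set.Ico (0 : ℝ) ε))
      = π A := by
  have hτ : ∀ x, ∀ l : ℝ, l < ε → τ x (Set.Ioi l) = 1 := by
    intro x l hl
    have h0 : τ x (Set.Iic l) = 0 :=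
      measure_mono_null (Set.Iic_subset_Iic.mpr hl.le) (hsupp x)
    have hc : τ x (Set.Ioi l) = τ x Set.univ - τ x (Set.Iic l) := by
      rw [← Set.compl_Iic]
      exact measure_compl measurableSet_Iic (measure_ne_top _ _)
    rw [hc, h0, measure_univ, tsub_zero]
  have key : ∀ (B : Set X), MeasurableSet B →
      ((π.prod (volume : Measure ℝ)).withDensity
        (fun p => (Set.Ici (0 : ℝ)).indicator (fun l => τ p.1 (Set.Ioi l) / EH) p.2))
        (B ×ˢ Set.Ico (0 : ℝ) ε) = π B * (ENNReal.ofReal ε / EH) := by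
    intro B hB
    have hs : MeasurableSet (B ×ˢ Set.Ico (0 : ℝ) ε) := hB.prod measurableSet_Ico
    rw [withDensity_apply _ hs]
    have : ∫⁻ p in B ×ˢ Set.Ico (0 : ℝ) ε,
        (Set.Ici (0 : ℝ)).indicator (fun l => τ p.1 (Set.Ioi l) / EH) p.2
          ∂(π.prod volume)
        = ∫⁻ _ in B ×ˢ Set.Ico (0 : ℝ) ε, (1 / EH) ∂(π.prod volume) := by
      apply setLIntegral_congr_fun hs
      intro p hp
      beta_reduce
      obtain ⟨hp1, hp2⟩ := hp
      rw [Set.indicator_of_mem (Set.mem_Ici.mpr hp2.1), hτ p.1 p.2 hp2.2]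
    rw [this, setLIntegral_const, Measure.prod_prod, Real.volume_Ico, sub_zero,
      one_div]
    rw [ENNReal.div_eq_inv_mul]; ring
  rw [key A hA, key Set.univ MeasurableSet.univ, measure_univ, one_mul]
  have hc0 : ENNReal.ofReal ε / EH ≠ 0 := by
    simp [ENNReal.div_eq_top, ENNReal.div_eq_zero_iff, hEHtop, ENNReal.ofReal_eq_zero,
      not_le.mpr hε]
  have hctop : ENNReal.ofReal ε / EH ≠ ⊤ := by
    simp [ENNReal.div_eq_top, hEH0]
  rw [mul_div_assoc, ENNReal.div_self hc0 hctop, mul_one]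
end

section
/- For univariate probability measures μ and ν with cdfs F_μ and F_ν, the 1-Wasserstein distance equals ∫_{−∞}^{∞} |F_μ(x) − F_ν(x)| dx. -/
open MeasureTheory ProbabilityTheory Set
open scoped ENNReal NNReal Topology

/-- auxiliary order fact -/
lemma minmax_iff (a b t : ℝ) :
    (min a b ≤ t ∧ t < max a b) ↔ (a ≤ t ∧ t < b) ∨ (b ≤ t ∧ t < a) := by
  simp only [min_le_iff, lt_max_iff]
  constructor
  · rintro ⟨h1 | h1, h2 | h2⟩ <;> [skip; exact Or.inl ⟨h1, h2⟩; exact Or.inr ⟨h1, h2⟩; skip] <;>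
      exact absurd h2 (not_lt.mpr h1)
  · rintro (⟨h1, h2⟩ | ⟨h1, h2⟩) <;> exact ⟨by tauto, by tauto⟩

lemma minmax_set_eq (t : ℝ) :
    {p : ℝ × ℝ | min p.1 p.2 ≤ t ∧ t < max p.1 p.2}
      = {p : ℝ × ℝ | p.1 ≤ t ∧ t < p.2} ∪ {p : ℝ × ℝ | p.2 ≤ t ∧ t < p.1} := by
  ext p; exact minmax_iff p.1 p.2 t

lemma measurableSet_S (t : ℝ) :
    MeasurableSet {p : ℝ × ℝ | min p.1 p.2 ≤ t ∧ t < max p.1 p.2} := by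
  rw [Set.setOf_and]
  exact (measurableSet_le (measurable_fst.min measurable_snd) measurable_const).inter
    (measurableSet_lt measurable_const (measurable_fst.max measurable_snd))

/-- Layer-cake for the cost. -/
lemma cost_eq_lintegral_measure (γ : Measure (ℝ × ℝ)) [SFinite γ] :
    ∫⁻ p, ENNReal.ofReal |p.1 - p.2| ∂γ
      = ∫⁻ t, γ {p : ℝ × ℝ | min p.1 p.2 ≤ t ∧ t < max p.1 p.2} := by
  have hmin : Measurable fun p : ℝ × ℝ => min p.1 p.2 := measurable_fst.min measurable_snd
  have hmax : Measurable fun p : ℝ × ℝ => max p.1 p.2 := measurable_fst.max measurable_snd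
  have h1 : ∀ p : ℝ × ℝ, ENNReal.ofReal |p.1 - p.2|
      = ∫⁻ t, Set.indicator (Set.Ico (min p.1 p.2) (max p.1 p.2)) (fun _ => (1:ℝ≥0∞)) t := by
    intro p
    rw [lintegral_indicator measurableSet_Ico, setLIntegral_one, Real.volume_Ico,
      max_sub_min_eq_abs, abs_sub_comm]
  simp_rw [h1]
  rw [lintegral_lintegral_swap]
  · refine lintegral_congr fun t => ?_
    have h2 : ∀ p : ℝ × ℝ, Set.indicator (Set.Ico (min p.1 p.2) (max p.1 p.2))
          (fun _ => (1:ℝ≥0∞)) t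
        = Set.indicator {p : ℝ × ℝ | min p.1 p.2 ≤ t ∧ t < max p.1 p.2} (fun _ => (1:ℝ≥0∞)) p := by
      intro p; simp [Set.indicator_apply, Set.mem_Ico]
    simp_rw [h2]
    rw [lintegral_indicator (measurableSet_S t), setLIntegral_one]
  · have : (Function.uncurry fun (p : ℝ × ℝ) (t : ℝ) =>
        Set.indicator (Set.Ico (min p.1 p.2) (max p.1 p.2)) (fun _ => (1:ℝ≥0∞)) t)
        = Set.indicator {q : (ℝ × ℝ) × ℝ | min q.1.1 q.1.2 ≤ q.2 ∧ q.2 < max q.1.1 q.1.2}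
          (fun _ => (1:ℝ≥0∞)) := by
      funext q; simp [Function.uncurry, Set.indicator_apply, Set.mem_Ico]
    refine Measurable.aemeasurable ?_
    rw [this]
    refine measurable_const.indicator ?_
    rw [Set.setOf_and]
    exact (measurableSet_le (hmin.comp measurable_fst) measurable_snd).inter
      (measurableSet_lt measurable_snd (hmax.comp measurable_fst))

noncomputable def qf (μ : Measure ℝ) (u : ℝ) : ℝ :=
  if u ∈ Set.Ioo (0:ℝ) 1 then sInf {x | u ≤ cdf μ x} else 0

lemma qf_set_nonempty (μ : Measure ℝ) {u : ℝ} (hu : u < 1) :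
    {x | u ≤ cdf μ x}.Nonempty := by
  have h : ∀ᶠ x in Filter.atTop, u < cdf μ x :=
    (tendsto_cdf_atTop μ).eventually_const_lt hu
  obtain ⟨x, hx⟩ := h.exists
  exact ⟨x, hx.le⟩

lemma qf_set_bddBelow (μ : Measure ℝ) {u : ℝ} (hu : 0 < u) :
    BddBelow {x | u ≤ cdf μ x} := by
  have h : ∀ᶠ x in Filter.atBot, cdf μ x < u :=
    (tendsto_cdf_atBot μ).eventually_lt_const hu
  obtain ⟨x₀, hx₀⟩ := h.exists
  refine ⟨x₀, fun y hy => ?_⟩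
  by_contra hxy
  exact absurd (hy.trans (monotone_cdf μ (le_of_not_ge hxy))) (not_le.mpr hx₀)

lemma qf_le_iff (μ : Measure ℝ) {u t : ℝ} (hu : u ∈ Set.Ioo (0:ℝ) 1) :
    qf μ u ≤ t ↔ u ≤ cdf μ t := by
  rw [qf, if_pos hu]
  set S := {x | u ≤ cdf μ x} with hS
  have hne : S.Nonempty := qf_set_nonempty μ hu.2
  have hbdd : BddBelow S := qf_set_bddBelow μ hu.1
  constructor
  · intro h
    have key : u ≤ cdf μ (sInf S) := by
      have h2 : ∀ᶠ x in 𝓝[>] (sInf S), u ≤ cdf μ x := by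
        filter_upwards [self_mem_nhdsWithin] with x hx
        obtain ⟨s, hsS, hs⟩ := (csInf_lt_iff hbdd hne).mp hx
        exact hsS.trans (monotone_cdf μ hs.le)
      have hrc : Filter.Tendsto (cdf μ) (𝓝[>] (sInf S)) (𝓝 (cdf μ (sInf S))) :=
        ((cdf μ).right_continuous (sInf S)).mono_left
          (nhdsWithin_mono _ Set.Ioi_subset_Ici_self)
      exact ge_of_tendsto hrc h2
    exact key.trans (monotone_cdf μ h)
  · intro h
    exact csInf_le hbdd h

lemma measurable_qf (μ : Measure ℝ) : Measurable (qf μ) := by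
  refine measurable_of_Iic fun t => ?_
  have hset : qf μ ⁻¹' Set.Iic t
      = (Set.Ioo (0:ℝ) 1 ∩ Set.Iic (cdf μ t))
        ∪ ((Set.Ioo (0:ℝ) 1)ᶜ ∩ (if (0:ℝ) ≤ t then Set.univ else ∅)) := by
    ext u
    by_cases hu : u ∈ Set.Ioo (0:ℝ) 1
    · simp only [Set.mem_preimage, Set.mem_Iic, Set.mem_union, Set.mem_inter_iff, hu,
        Set.mem_compl_iff, not_true, false_and, or_false, true_and]
      exact qf_le_iff μ hu
    · have hq : qf μ u = 0 := by rw [qf, if_neg hu]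
      simp only [Set.mem_preimage, Set.mem_Iic, hq, Set.mem_union, Set.mem_inter_iff,
        hu, false_and, false_or, Set.mem_compl_iff, not_false_iff, true_and]
      split_ifs with h <;> simp [h, not_le.mp]
  rw [hset]
  refine (measurableSet_Ioo.inter measurableSet_Iic).union
    (measurableSet_Ioo.compl.inter ?_)
  split_ifs <;> simp

lemma ioo_inter_Ioc (a b : ℝ) (ha : 0 ≤ a) (hb : b ≤ 1) :
    Set.Ioo (0:ℝ) 1 ∩ Set.Ioc a b = Set.Ioc a b \ {1} := by
  ext u
  simp only [Set.mem_inter_iff, Set.mem_Ioo, Set.mem_Ioc, Set.mem_diff, Set.mem_singleton_iff]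
  constructor
  · rintro ⟨⟨_, hu1⟩, h⟩; exact ⟨h, ne_of_lt hu1⟩
  · rintro ⟨⟨hau, hub⟩, hne⟩
    exact ⟨⟨lt_of_le_of_lt ha hau, lt_of_le_of_ne (hub.trans hb) hne⟩, hau, hub⟩

lemma volume_ioo_inter_Ioc (a b : ℝ) (ha : 0 ≤ a) (hb : b ≤ 1) :
    volume (Set.Ioo (0:ℝ) 1 ∩ Set.Ioc a b) = ENNReal.ofReal (b - a) := by
  rw [ioo_inter_Ioc a b ha hb, measure_diff_null (Real.volume_singleton), Real.volume_Ioc]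

lemma map_qf (μ : Measure ℝ) [IsProbabilityMeasure μ] :
    Measure.map (qf μ) (volume.restrict (Set.Ioo (0:ℝ) 1)) = μ := by
  have hqm := measurable_qf μ
  have hprob : IsProbabilityMeasure (Measure.map (qf μ) (volume.restrict (Set.Ioo (0:ℝ) 1))) := by
    constructor
    rw [Measure.map_apply hqm MeasurableSet.univ]
    simp [Real.volume_Ioo]
  refine Measure.ext_of_Iic _ _ fun t => ?_
  rw [Measure.map_apply hqm measurableSet_Iic, Measure.restrict_apply (hqm measurableSet_Iic)]
  have hset : qf μ ⁻¹' Set.Iic t ∩ Set.Ioo 0 1 = Set.Ioo (0:ℝ) 1 ∩ Set.Ioc 0 (cdf μ t) := by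
    ext u
    simp only [Set.mem_inter_iff, Set.mem_preimage, Set.mem_Iic, Set.mem_Ioc, Set.mem_Ioo]
    constructor
    · rintro ⟨h, hu⟩
      exact ⟨⟨hu.1, hu.2⟩, hu.1, (qf_le_iff μ hu).mp h⟩
    · rintro ⟨hu, _, h⟩
      exact ⟨(qf_le_iff μ hu).mpr h, hu⟩
  rw [hset, volume_ioo_inter_Ioc _ _ le_rfl (cdf_le_one μ t), sub_zero, ofReal_cdf]

set_option maxHeartbeats 1000000 in
lemma quantile_coupling_slice (μ ν : Measure ℝ) [IsProbabilityMeasure μ] [IsProbabilityMeasure ν]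
    (t : ℝ) :
    volume ((fun u => (qf μ u, qf ν u)) ⁻¹' {p : ℝ × ℝ | min p.1 p.2 ≤ t ∧ t < max p.1 p.2}
        ∩ Set.Ioo 0 1)
      = ENNReal.ofReal |cdf μ t - cdf ν t| := by
  have hset : (fun u => (qf μ u, qf ν u)) ⁻¹' {p : ℝ × ℝ | min p.1 p.2 ≤ t ∧ t < max p.1 p.2}
        ∩ Set.Ioo 0 1
      = (Set.Ioo (0:ℝ) 1 ∩ Set.Ioc (cdf ν t) (cdf μ t))
        ∪ (Set.Ioo (0:ℝ) 1 ∩ Set.Ioc (cdf μ t) (cdf ν t)) := by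
    ext u
    by_cases hu : u ∈ Set.Ioo (0:ℝ) 1
    · have hμiff : qf μ u ≤ t ↔ u ≤ cdf μ t := qf_le_iff μ hu
      have hνiff : qf ν u ≤ t ↔ u ≤ cdf ν t := qf_le_iff ν hu
      have hμ' : t < qf μ u ↔ cdf μ t < u :=
        ⟨fun h => not_le.mp fun hle => not_lt.mpr (hμiff.mpr hle) h,
         fun h => not_le.mp fun hle => not_lt.mpr (hμiff.mp hle) h⟩
      have hν' : t < qf ν u ↔ cdf ν t < u :=
        ⟨fun h => not_le.mp fun hle => not_lt.mpr (hνiff.mpr hle) h,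
         fun h => not_le.mp fun hle => not_lt.mpr (hνiff.mp hle) h⟩
      have key : (min (qf μ u) (qf ν u) ≤ t ∧ t < max (qf μ u) (qf ν u))
          ↔ ((cdf ν t < u ∧ u ≤ cdf μ t) ∨ (cdf μ t < u ∧ u ≤ cdf ν t)) := by
        rw [minmax_iff, hμiff, hνiff, hμ', hν']
        tauto
      simp only [Set.mem_inter_iff, Set.mem_preimage, Set.mem_union, Set.mem_Ioc,
        Set.mem_setOf_eq, hu, and_true, true_and]
      exact key
    · simp [hu]
  rcases le_total (cdf ν t) (cdf μ t) with h | h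
  · rw [hset, Set.Ioc_eq_empty (not_lt.mpr h), Set.inter_empty, Set.union_empty,
      volume_ioo_inter_Ioc _ _ (cdf_nonneg ν t) (cdf_le_one μ t),
      abs_of_nonneg (sub_nonneg.mpr h)]
  · rw [hset, Set.Ioc_eq_empty (not_lt.mpr h), Set.inter_empty, Set.empty_union,
      volume_ioo_inter_Ioc _ _ (cdf_nonneg μ t) (cdf_le_one ν t),
      abs_of_nonpos (sub_nonpos.mpr h), neg_sub]

lemma lower_slice (μ ν : Measure ℝ) [IsProbabilityMeasure μ] [IsProbabilityMeasure ν]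
    (γ : Measure (ℝ × ℝ)) [IsProbabilityMeasure γ]
    (h1 : γ.map Prod.fst = μ) (h2 : γ.map Prod.snd = ν) (t : ℝ) :
    ENNReal.ofReal |cdf μ t - cdf ν t| ≤ γ {p : ℝ × ℝ | min p.1 p.2 ≤ t ∧ t < max p.1 p.2} := by
  set A := {p : ℝ × ℝ | p.1 ≤ t ∧ p.2 ≤ t} with hA
  set B := {p : ℝ × ℝ | p.1 ≤ t ∧ t < p.2} with hB
  set C := {p : ℝ × ℝ | p.2 ≤ t ∧ t < p.1} with hC
  have hAm : MeasurableSet A := by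
    rw [hA, Set.setOf_and]
    exact (measurableSet_le measurable_fst measurable_const).inter
      (measurableSet_le measurable_snd measurable_const)
  have hBm : MeasurableSet B := by
    rw [hB, Set.setOf_and]
    exact (measurableSet_le measurable_fst measurable_const).inter
      (measurableSet_lt measurable_const measurable_snd)
  have hCm : MeasurableSet C := by
    rw [hC, Set.setOf_and]
    exact (measurableSet_le measurable_snd measurable_const).inter
      (measurableSet_lt measurable_const measurable_fst)
  have hμt : μ (Set.Iic t) = γ A + γ B := by
    rw [← h1, Measure.map_apply measurable_fst measurableSet_Iic]
    have : Prod.fst ⁻¹' Set.Iic t = A ∪ B := by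
      ext p
      simp only [Set.mem_preimage, Set.mem_Iic, Set.mem_union, hA, hB, Set.mem_setOf_eq]
      constructor
      · intro h; rcases le_or_gt p.2 t with h' | h'
        · exact Or.inl ⟨h, h'⟩
        · exact Or.inr ⟨h, h'⟩
      · rintro (⟨h, _⟩ | ⟨h, _⟩) <;> exact h
    rw [this, measure_union ?_ hBm]
    rw [Set.disjoint_left]
    rintro p ⟨hp1, hp2⟩ ⟨hq1, hq2⟩
    exact absurd hq2 (not_lt.mpr hp2)
  have hνt : ν (Set.Iic t) = γ A + γ C := by
    rw [← h2, Measure.map_apply measurable_snd measurableSet_Iic]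
    have : Prod.snd ⁻¹' Set.Iic t = A ∪ C := by
      ext p
      simp only [Set.mem_preimage, Set.mem_Iic, Set.mem_union, hA, hC, Set.mem_setOf_eq]
      constructor
      · intro h; rcases le_or_gt p.1 t with h' | h'
        · exact Or.inl ⟨h', h⟩
        · exact Or.inr ⟨h, h'⟩
      · rintro (⟨_, h⟩ | ⟨h, _⟩) <;> exact h
    rw [this, measure_union ?_ hCm]
    rw [Set.disjoint_left]
    rintro p ⟨hp1, hp2⟩ ⟨hq1, hq2⟩
    exact absurd hq2 (not_lt.mpr hp1)
  have hSeq : γ {p : ℝ × ℝ | min p.1 p.2 ≤ t ∧ t < max p.1 p.2} = γ B + γ C := by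
    rw [minmax_set_eq t, measure_union ?_ hCm]
    rw [Set.disjoint_left]
    rintro p ⟨hp1, hp2⟩ ⟨hq1, hq2⟩
    exact absurd hq2 (not_lt.mpr hp1)
  refine ENNReal.ofReal_le_of_le_toReal ?_
  have hAfin : γ A ≠ ⊤ := measure_ne_top γ A
  have hBfin : γ B ≠ ⊤ := measure_ne_top γ B
  have hCfin : γ C ≠ ⊤ := measure_ne_top γ C
  rw [hSeq, ENNReal.toReal_add hBfin hCfin, cdf_eq_real μ t, cdf_eq_real ν t, measureReal_def, measureReal_def, hμt, hνt,
    ENNReal.toReal_add hAfin hBfin, ENNReal.toReal_add hAfin hCfin]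
  have hb := ENNReal.toReal_nonneg (a := γ B)
  have hc := ENNReal.toReal_nonneg (a := γ C)
  rw [abs_le]
  constructor <;> linarith

/-- For Borel probability measures `μ` and `ν` on `ℝ` with finite first moments, the
1-Wasserstein distance (the infimum over couplings `γ` of `∫ |x−y| γ(dx,dy)`) equals
`∫ |F_μ(x) − F_ν(x)| dx`, where `F_μ`, `F_ν` are the cdfs. -/
theorem wasserstein1_eq_integral_abs_cdf_sub
    (μ ν : Measure ℝ) [IsProbabilityMeasure μ] [IsProbabilityMeasure ν]
    (hμ : Integrable (fun x => x) μ) (hν : Integrable (fun x => x) ν) :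
    sInf ((fun γ : Measure (ℝ × ℝ) => ∫⁻ p, ENNReal.ofReal |p.1 - p.2| ∂γ) ''
        {γ | γ.map Prod.fst = μ ∧ γ.map Prod.snd = ν})
      = ∫⁻ x, ENNReal.ofReal |cdf μ x - cdf ν x| := by
  apply le_antisymm
  · set f : ℝ → ℝ × ℝ := fun u => (qf μ u, qf ν u) with hf
    have hfm : Measurable f := (measurable_qf μ).prodMk (measurable_qf ν)
    set γ₀ := Measure.map f (volume.restrict (Set.Ioo (0:ℝ) 1)) with hγ₀
    have h1 : γ₀.map Prod.fst = μ := by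
      rw [hγ₀, Measure.map_map measurable_fst hfm]
      exact map_qf μ
    have h2 : γ₀.map Prod.snd = ν := by
      rw [hγ₀, Measure.map_map measurable_snd hfm]
      exact map_qf ν
    have hγprob : IsProbabilityMeasure γ₀ := by
      constructor
      rw [hγ₀, Measure.map_apply hfm MeasurableSet.univ]
      simp [Real.volume_Ioo]
    refine sInf_le ⟨γ₀, ⟨h1, h2⟩, ?_⟩
    show ∫⁻ p, ENNReal.ofReal |p.1 - p.2| ∂γ₀ = _
    rw [cost_eq_lintegral_measure γ₀]
    refine lintegral_congr fun t => ?_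
    rw [hγ₀, Measure.map_apply hfm (measurableSet_S t),
      Measure.restrict_apply (hfm (measurableSet_S t))]
    exact quantile_coupling_slice μ ν t
  · refine le_sInf ?_
    rintro x ⟨γ, ⟨h1, h2⟩, rfl⟩
    have hγprob : IsProbabilityMeasure γ := by
      constructor
      have huniv : γ.map Prod.fst Set.univ = 1 := by rw [h1]; exact measure_univ
      rwa [Measure.map_apply measurable_fst MeasurableSet.univ, Set.preimage_univ] at huniv
    show _ ≤ ∫⁻ p, ENNReal.ofReal |p.1 - p.2| ∂γ
    rw [cost_eq_lintegral_measure γ]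
    exact lintegral_mono fun t => lower_slice μ ν γ h1 h2 t
end

section
/- Under the single-step jump dynamics, the anytime distribution α is invariant for the transition kernel λ(dx₊,dl₊|x,l) = ρ(x,l) λ₁(dx₊,dl₊|x,l) + (1−ρ(x,l)) λ₀(dx₊,dl₊|x,l), where ρ(x,l) = (F_τ(l+Δ|x) − F_τ(l|x))/F̄_τ(l|x), λ₁ advances the chain by κ with a new lag in [0,Δ), and λ₀ = δ_x ⊗ δ_{l+Δ}; that is, ∫∫ λ(dx₊,dl₊|x,l) α(dx,dl) = α(dx₊,dl₊). -/
open MeasureTheory Set ProbabilityTheory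
open scoped ENNReal NNReal

/-- Under the single-step jump dynamics, the anytime distribution
`α(dx,dl) = (F̄_τ(l|x)/E_τ[H]) π(dx) dl` is invariant for the transition kernel
`λ(dxp,dlp|x,l) = ρ(x,l) λ₁(dxp,dlp|x,l) + (1−ρ(x,l)) λ₀(dxp,dlp|x,l)`, where
`ρ(x,l) = (F_τ(l+Δ|x) − F_τ(l|x))/F̄_τ(l|x)` is the probability of a jump,
`λ₁(dxp,dlp|x,l) = κ(dxp|x,l+Δ−lp) τ(l+Δ−lp|x) 𝟙_{[0,Δ)}(dlp)/(F_τ(l+Δ|x)−F_τ(l|x))`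
is the transition if a jump occurs, and `λ₀ = δ_x ⊗ δ_{l+Δ}` is the transition if no
jump occurs.  Here `τ(·|x)` has density `f x` on `(0,∞)` with no mass on `(0,Δ]`
(minimal hold time), and `π` is invariant for the marginal kernel
`κ(dxp|x) = ∫₀^∞ κ(dxp|x,h) τ(h|x) dh`.  The mixture kernel is written below with the
normalization constants of `ρ·λ₁` and `(1−ρ)·λ₀` combined, which is equivalent:
`ρ·λ₁ = F̄_τ(l|x)⁻¹ · (unnormalized λ₁)` and `(1−ρ) = F̄_τ(l+Δ|x)/F̄_τ(l|x)`. -/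
theorem anytime_invariant_single_step {X : Type*} [MeasurableSpace X]
    (π : Measure X) [IsProbabilityMeasure π]
    -- the joint kernel κ(dxp | x, h):
    (κ : ProbabilityTheory.Kernel (X × ℝ) X) [ProbabilityTheory.IsMarkovKernel κ]
    -- the hold-time density f x h of τ(dh|x) with respect to Lebesgue measure on (0,∞):
    (f : X → ℝ → ℝ) (hf : Measurable fun p : X × ℝ => f p.1 p.2)
    (hf_nonneg : ∀ x h, 0 ≤ f x h)
    -- τ(·|x) is a probability measure on (0,∞):
    (τ : X → Measure ℝ)
    (hτ : ∀ x, τ x = ((volume : Measure ℝ).restrict (Set.Ioi 0)).withDensity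
        (fun h => ENNReal.ofReal (f x h)))
    (hτ_prob : ∀ x, IsProbabilityMeasure (τ x))
    -- minimal hold time: τ((0,Δ]|x) = 0:
    (Δ : ℝ) (hΔ : 0 < Δ) (hmin : ∀ x h, h ≤ Δ → f x h = 0)
    -- finite positive overall mean hold time:
    (EH : ℝ≥0∞)
    (hEH : EH = ∫⁻ x, (∫⁻ l in Set.Ici (0 : ℝ), τ x (Set.Ioi l)) ∂π)
    (hEH0 : EH ≠ 0) (hEHtop : EH ≠ ∞)
    -- π is invariant for the marginal kernel ∫₀^∞ κ(dxp|x,h) τ(dh|x):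
    (hinv : π.bind (fun x => (τ x).bind (fun h => κ (x, h))) = π)
    -- the anytime distribution α:
    (α : Measure (X × ℝ))
    (hα : α = (π.prod (volume : Measure ℝ)).withDensity
        (fun p => (Set.Ici (0 : ℝ)).indicator (fun l => τ p.1 (Set.Ioi l) / EH) p.2))
    -- the transition kernel Λ = ρ·λ₁ + (1−ρ)·λ₀:
    (Λ : X × ℝ → Measure (X × ℝ))
    (hΛ : ∀ x l, Λ (x, l) =
        (τ x (Set.Ioi l))⁻¹ •
          (((volume : Measure ℝ).restrict (Set.Ico 0 Δ)).withDensity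
              (fun lp => ENNReal.ofReal (f x (l + Δ - lp)))).bind
            (fun lp => (κ (x, l + Δ - lp)).map (fun xp => (xp, lp)))
        + (τ x (Set.Ioi (l + Δ)) / τ x (Set.Ioi l)) • Measure.dirac (x, l + Δ)) :
    α.bind Λ = α := by
  classical
  -- kernel K ((x,h),lp) = (κ (x,h)).map (fun xp => (xp,lp))
  set K : Kernel ((X × ℝ) × ℝ) (X × ℝ) :=
    (κ.prodMkRight ℝ) ×ₖ (Kernel.deterministic Prod.snd measurable_snd) with hK
  have hKapp : ∀ (x : X) (h lp : ℝ),
      K ((x, h), lp) = (κ (x, h)).map (fun xp => (xp, lp)) := by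
    intro x h lp
    rw [hK, Kernel.prod_apply, Kernel.prodMkRight_apply, Kernel.deterministic_apply]
    exact (Measure.prod_dirac lp).symm.symm
  have hKmarkov : IsMarkovKernel K := by rw [hK]; infer_instance
  -- τ on Ioi l for l ≥ 0
  have hτIoi : ∀ (x : X) (l : ℝ), 0 ≤ l →
      τ x (Set.Ioi l) = ∫⁻ h in Set.Ioi l, ENNReal.ofReal (f x h) := by
    intro x l hl
    rw [hτ x, withDensity_apply _ measurableSet_Ioi, Measure.restrict_restrict measurableSet_Ioi,
      Set.Ioi_inter_Ioi, max_eq_left hl]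
  -- τ (Ioi l) = 1 for l ≤ Δ
  have hτone : ∀ (x : X) (l : ℝ), l ≤ Δ → τ x (Set.Ioi l) = 1 := by
    intro x l hl
    have hprob := hτ_prob x
    have hIic : τ x (Set.Iic l) = 0 := by
      have h1 : τ x (Set.Iic l) ≤ τ x (Set.Iic Δ) := measure_mono (Set.Iic_subset_Iic.mpr hl)
      have h2 : τ x (Set.Iic Δ) = 0 := by
        rw [hτ x, withDensity_apply _ measurableSet_Iic,
          Measure.restrict_restrict measurableSet_Iic]
        have hz : ∀ᵐ h ∂(volume.restrict (Set.Iic Δ ∩ Set.Ioi 0)),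
            ENNReal.ofReal (f x h) = 0 := by
          refine (ae_restrict_iff' (measurableSet_Iic.inter measurableSet_Ioi)).mpr
            (ae_of_all _ ?_)
          intro h hh
          rw [hmin x h hh.1, ENNReal.ofReal_zero]
        rw [lintegral_congr_ae hz, lintegral_zero]
      exact le_antisymm (h1.trans h2.le) zero_le
    have := measure_union (μ := τ x) (Set.Iic_disjoint_Ioi (le_refl l)) measurableSet_Ioi
    rw [Set.Iic_union_Ioi, measure_univ, hIic, zero_add] at this
    exact this.symm
  -- τ (Ioi l) ≤ 1
  have hτle : ∀ (x : X) (l : ℝ), τ x (Set.Ioi l) ≤ 1 := by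
    intro x l
    have := hτ_prob x
    exact prob_le_one
  -- joint measurability of (x,l) ↦ τ x (Ioi l)
  have hgm : Measurable fun p : X × ℝ => τ p.1 (Set.Ioi p.2) := by
    have heq : ∀ p : X × ℝ, τ p.1 (Set.Ioi p.2)
        = ∫⁻ h, (Set.Ioi p.2).indicator (fun h => ENNReal.ofReal (f p.1 h)) h
            ∂(volume.restrict (Set.Ioi (0:ℝ))) := by
      intro p
      rw [hτ p.1, withDensity_apply _ measurableSet_Ioi, ← lintegral_indicator measurableSet_Ioi]
    simp_rw [heq]
    apply Measurable.lintegral_prod_right' (ν := volume.restrict (Set.Ioi (0:ℝ)))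
      (f := fun q : (X × ℝ) × ℝ => (Set.Ioi q.1.2).indicator (fun h => ENNReal.ofReal (f q.1.1 h)) q.2)
    simp only [Set.indicator_apply, Set.mem_Ioi]
    exact Measurable.ite (measurableSet_lt (measurable_fst.snd) measurable_snd)
      (ENNReal.measurable_ofReal.comp (hf.comp (measurable_fst.fst.prodMk measurable_snd)))
      measurable_const
    -- the jump part of Λ, applied to a set
  set Bs : Set (X × ℝ) → X → ℝ → ℝ≥0∞ := fun t x l =>
    ∫⁻ lp in Set.Ico 0 Δ, ENNReal.ofReal (f x (l + Δ - lp)) * K ((x, l + Δ - lp), lp) t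
      ∂volume with hBsdef
  have hBs : ∀ (t : Set (X × ℝ)), MeasurableSet t → ∀ (x : X) (l : ℝ),
      ((((volume : Measure ℝ).restrict (Set.Ico 0 Δ)).withDensity
          (fun lp => ENNReal.ofReal (f x (l + Δ - lp)))).bind
        (fun lp => (κ (x, l + Δ - lp)).map (fun xp => (xp, lp)))) t = Bs t x l := by
    intro t ht x l
    have hd : Measurable fun lp : ℝ => ENNReal.ofReal (f x (l + Δ - lp)) :=
      ENNReal.measurable_ofReal.comp (hf.comp
        (measurable_const.prodMk ((measurable_const.sub measurable_id))))
    have hmapm : Measurable fun lp : ℝ => (κ (x, l + Δ - lp)).map (fun xp => (xp, lp)) := by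
      have : (fun lp : ℝ => (κ (x, l + Δ - lp)).map (fun xp => (xp, lp)))
          = fun lp : ℝ => K ((x, l + Δ - lp), lp) := by
        funext lp; rw [hKapp]
      rw [this]
      exact K.measurable.comp
        ((measurable_const.prodMk (measurable_const.sub measurable_id)).prodMk measurable_id)
    rw [Measure.bind_apply ht hmapm.aemeasurable]
    have h1 : ∀ lp : ℝ, (Measure.map (fun xp => (xp, lp)) (κ (x, l + Δ - lp))) t
        = K ((x, l + Δ - lp), lp) t := fun lp => by rw [hKapp]
    simp_rw [h1]
    have hKt : Measurable fun lp : ℝ => K ((x, l + Δ - lp), lp) t :=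
      (Kernel.measurable_coe K ht).comp
        ((measurable_const.prodMk (measurable_const.sub measurable_id)).prodMk measurable_id)
    rw [lintegral_withDensity_eq_lintegral_mul _ hd hKt]
    simp only [Pi.mul_apply, hBsdef]
  -- joint measurability of Bs
  have hBsm : ∀ (t : Set (X × ℝ)), MeasurableSet t →
      Measurable fun p : X × ℝ => Bs t p.1 p.2 := by
    intro t ht
    apply Measurable.lintegral_prod_right' (ν := volume.restrict (Set.Ico 0 Δ))
      (f := fun q : (X × ℝ) × ℝ =>
        ENNReal.ofReal (f q.1.1 (q.1.2 + Δ - q.2)) * K ((q.1.1, q.1.2 + Δ - q.2), q.2) t)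
    have hmap : Measurable fun q : (X × ℝ) × ℝ => ((q.1.1, q.1.2 + Δ - q.2), q.2) :=
      ((measurable_fst.fst.prodMk
        (((measurable_fst.snd.add_const Δ)).sub measurable_snd)).prodMk measurable_snd)
    exact ((ENNReal.measurable_ofReal.comp (hf.comp
      (measurable_fst.fst.prodMk (((measurable_fst.snd.add_const Δ)).sub measurable_snd)))).mul
      ((Kernel.measurable_coe K ht).comp hmap))
  -- Λ applied to a set
  have hΛapp : ∀ (t : Set (X × ℝ)), MeasurableSet t → ∀ (x : X) (l : ℝ),
      Λ (x, l) t = (τ x (Set.Ioi l))⁻¹ * Bs t x l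
        + (τ x (Set.Ioi (l + Δ)) / τ x (Set.Ioi l)) * t.indicator 1 (x, l + Δ) := by
    intro t ht x l
    rw [hΛ x l]
    rw [Measure.add_apply, Measure.smul_apply, Measure.smul_apply, smul_eq_mul, smul_eq_mul,
      Measure.dirac_apply' _ ht, hBs t ht x l]
  -- measurability of Λ
  have hΛm : Measurable Λ := by
    refine Measure.measurable_measure.mpr fun t ht => ?_
    have : (fun p : X × ℝ => Λ p t) = fun p : X × ℝ =>
        (τ p.1 (Set.Ioi p.2))⁻¹ * Bs t p.1 p.2
          + (τ p.1 (Set.Ioi (p.2 + Δ)) / τ p.1 (Set.Ioi p.2)) * t.indicator 1 (p.1, p.2 + Δ) := by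
      funext p
      exact hΛapp t ht p.1 p.2
    rw [this]
    have hshift : Measurable fun p : X × ℝ => (p.1, p.2 + Δ) :=
      measurable_fst.prodMk (measurable_snd.add_const Δ)
    exact ((hgm.inv).mul (hBsm t ht)).add
      (((hgm.comp hshift).div hgm).mul ((measurable_one.indicator ht).comp hshift))
    -- change of variables lp ↦ l + Δ - lp
  have hsub : ∀ (g : ℝ → ℝ≥0∞) (l : ℝ),
      ∫⁻ lp in Set.Ico 0 Δ, g (l + Δ - lp) ∂volume
        = ∫⁻ h in Set.Ioc l (l + Δ), g h ∂volume := by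
    intro g l
    have := (Measure.measurePreserving_sub_left volume (l + Δ)).setLIntegral_comp_preimage_emb
      (MeasurableEquiv.subLeft (l + Δ)).measurableEmbedding g (Set.Ioc l (l + Δ))
    rw [Set.preimage_const_sub_Ioc, sub_self, add_sub_cancel_left] at this
    exact this
  -- change of variables l ↦ l + c
  have htrans : ∀ (g : ℝ → ℝ≥0∞) (c : ℝ),
      ∫⁻ l in Set.Ici 0, g (l + c) ∂volume = ∫⁻ h in Set.Ici c, g h ∂volume := by
    intro g c
    have := (measurePreserving_add_right volume c).setLIntegral_comp_preimage_emb
      (measurableEmbedding_addRight c) g (Set.Ici c)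
    rw [Set.preimage_add_const_Ici, sub_self] at this
    exact this
  -- the marginal kernel
  have hm_apply : ∀ (x : X) (t : Set X), MeasurableSet t →
      ((τ x).bind (fun h => κ (x, h))) t
        = ∫⁻ h in Set.Ioi 0, ENNReal.ofReal (f x h) * κ (x, h) t ∂volume := by
    intro x t ht
    rw [Measure.bind_apply ht
        (show Measurable fun h : ℝ => κ (x, h) from κ.measurable.comp measurable_prodMk_left).aemeasurable,
      hτ x,
      lintegral_withDensity_eq_lintegral_mul _
        (show Measurable fun h : ℝ => ENNReal.ofReal (f x h) from
          ENNReal.measurable_ofReal.comp (hf.comp measurable_prodMk_left))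
        (show Measurable fun h : ℝ => κ (x, h) t from
          (Kernel.measurable_coe κ ht).comp measurable_prodMk_left)]
    rfl
  have hm_meas : Measurable fun x => (τ x).bind (fun h => κ (x, h)) := by
    refine Measure.measurable_measure.mpr fun t ht => ?_
    simp_rw [fun x => hm_apply x t ht]
    apply Measurable.lintegral_prod_right' (ν := volume.restrict (Set.Ioi (0:ℝ)))
      (f := fun q : X × ℝ => ENNReal.ofReal (f q.1 q.2) * κ q t)
    exact (ENNReal.measurable_ofReal.comp hf).mul (Kernel.measurable_coe κ ht)
  -- now fix a measurable set s
  refine Measure.ext fun s hs => ?_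
  have hsl : ∀ lp : ℝ, MeasurableSet ((fun xp : X => (xp, lp)) ⁻¹' s) :=
    fun lp => measurable_prodMk_right hs
  have hKslice : ∀ (x : X) (h lp : ℝ),
      K ((x, h), lp) s = κ (x, h) ((fun xp : X => (xp, lp)) ⁻¹' s) := by
    intro x h lp
    rw [hKapp, Measure.map_apply measurable_prodMk_right hs]
  -- pointwise identity on the density times the kernel
  have hpt : ∀ (x : X) (l : ℝ), 0 ≤ l →
      τ x (Set.Ioi l) / EH * Λ (x, l) s
        = EH⁻¹ * Bs s x l
          + τ x (Set.Ioi (l + Δ)) * EH⁻¹ * s.indicator 1 (x, l + Δ) := by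
    intro x l hl
    rw [hΛapp s hs x l]
    rcases eq_or_ne (τ x (Set.Ioi l)) 0 with ha | ha
    · have hc : τ x (Set.Ioi (l + Δ)) = 0 :=
        le_antisymm ((measure_mono (Set.Ioi_subset_Ioi (by linarith))).trans ha.le) zero_le
      have hB0 : Bs s x l = 0 := by
        have h1 : Bs s x l ≤ ∫⁻ lp in Set.Ico 0 Δ, ENNReal.ofReal (f x (l + Δ - lp)) ∂volume := by
          refine lintegral_mono fun lp => ?_
          have : IsProbabilityMeasure (K ((x, l + Δ - lp), lp)) :=
            hKmarkov.isProbabilityMeasure _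
          exact mul_le_of_le_one_right' prob_le_one
        have h2 := hsub (fun h => ENNReal.ofReal (f x h)) l
        have h3 : ∫⁻ h in Set.Ioc l (l + Δ), ENNReal.ofReal (f x h) ∂volume
            ≤ ∫⁻ h in Set.Ioi l, ENNReal.ofReal (f x h) ∂volume :=
          lintegral_mono_set Set.Ioc_subset_Ioi_self
        rw [← hτIoi x l hl] at h3
        exact le_antisymm ((h1.trans_eq h2).trans (h3.trans ha.le)) zero_le
      rw [ha, hc, hB0]
      simp
    · have hatop : τ x (Set.Ioi l) ≠ ⊤ := ((hτle x l).trans_lt ENNReal.one_lt_top).ne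
      have haa : τ x (Set.Ioi l) * (τ x (Set.Ioi l))⁻¹ = 1 := ENNReal.mul_inv_cancel ha hatop
      rw [div_eq_mul_inv, div_eq_mul_inv]
      calc τ x (Set.Ioi l) * EH⁻¹ *
            ((τ x (Set.Ioi l))⁻¹ * Bs s x l
              + τ x (Set.Ioi (l + Δ)) * (τ x (Set.Ioi l))⁻¹ * s.indicator 1 (x, l + Δ))
          = τ x (Set.Ioi l) * (τ x (Set.Ioi l))⁻¹ * (EH⁻¹ * Bs s x l)
            + τ x (Set.Ioi l) * (τ x (Set.Ioi l))⁻¹ *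
              (τ x (Set.Ioi (l + Δ)) * EH⁻¹ * s.indicator 1 (x, l + Δ)) := by ring
        _ = EH⁻¹ * Bs s x l
            + τ x (Set.Ioi (l + Δ)) * EH⁻¹ * s.indicator 1 (x, l + Δ) := by
            rw [haa, one_mul, one_mul]
    -- measurability of Λ applied to s, and of the density
  have hΛs : Measurable fun p : X × ℝ => Λ p s := Measure.measurable_measure.mp hΛm s hs
  have hDm : Measurable fun p : X × ℝ =>
      (Set.Ici (0:ℝ)).indicator (fun l => τ p.1 (Set.Ioi l) / EH) p.2 := by
    simp only [Set.indicator_apply, Set.mem_Ici]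
    exact Measurable.ite (measurableSet_le measurable_const measurable_snd)
      (hgm.div measurable_const) measurable_const
  -- LHS as an iterated integral
  have hL : (α.bind Λ) s
      = ∫⁻ x, ∫⁻ l, ((Set.Ici (0:ℝ)).indicator (fun l => τ x (Set.Ioi l) / EH) l) * Λ (x, l) s
          ∂volume ∂π := by
    rw [Measure.bind_apply hs hΛm.aemeasurable, hα,
      lintegral_withDensity_eq_lintegral_mul _ hDm hΛs]
    simp only [Pi.mul_apply]
    rw [lintegral_prod (fun p : X × ℝ => (Set.Ici (0:ℝ)).indicator (fun l => τ p.1 (Set.Ioi l) / EH) p.2 * Λ p s) ((hDm.mul hΛs).aemeasurable)]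
  -- inner integral of the LHS
  have hinner1 : ∀ x : X,
      (∫⁻ l, ((Set.Ici (0:ℝ)).indicator (fun l => τ x (Set.Ioi l) / EH) l) * Λ (x, l) s ∂volume)
        = (∫⁻ l in Set.Ici (0:ℝ), EH⁻¹ * Bs s x l ∂volume)
          + ∫⁻ l in Set.Ici (0:ℝ),
              τ x (Set.Ioi (l + Δ)) * EH⁻¹ * s.indicator 1 (x, l + Δ) ∂volume := by
    intro x
    have e1 : ∀ l : ℝ, ((Set.Ici (0:ℝ)).indicator (fun l => τ x (Set.Ioi l) / EH) l) * Λ (x, l) s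
        = (Set.Ici (0:ℝ)).indicator
            (fun l => EH⁻¹ * Bs s x l
              + τ x (Set.Ioi (l + Δ)) * EH⁻¹ * s.indicator 1 (x, l + Δ)) l := by
      intro l
      by_cases hl : l ∈ Set.Ici (0:ℝ)
      · rw [Set.indicator_of_mem hl, Set.indicator_of_mem hl, hpt x l hl]
      · rw [Set.indicator_of_notMem hl, Set.indicator_of_notMem hl, zero_mul]
    simp_rw [e1]
    rw [lintegral_indicator measurableSet_Ici]
    exact lintegral_add_left (measurable_const.mul ((hBsm s hs).comp measurable_prodMk_left)) _
  have hmeas1 : Measurable fun x : X => ∫⁻ l in Set.Ici (0:ℝ), EH⁻¹ * Bs s x l ∂volume := by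
    apply Measurable.lintegral_prod_right' (ν := volume.restrict (Set.Ici (0:ℝ)))
      (f := fun p : X × ℝ => EH⁻¹ * Bs s p.1 p.2)
    exact measurable_const.mul (hBsm s hs)
  have hLsplit : (α.bind Λ) s
      = (∫⁻ x, ∫⁻ l in Set.Ici (0:ℝ), EH⁻¹ * Bs s x l ∂volume ∂π)
        + ∫⁻ x, ∫⁻ l in Set.Ici (0:ℝ),
            τ x (Set.Ioi (l + Δ)) * EH⁻¹ * s.indicator 1 (x, l + Δ) ∂volume ∂π := by
    rw [hL]
    simp_rw [hinner1]
    exact lintegral_add_left hmeas1 _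
  -- translate the second term
  have hT2 : ∀ x : X,
      ∫⁻ l in Set.Ici (0:ℝ), τ x (Set.Ioi (l + Δ)) * EH⁻¹ * s.indicator 1 (x, l + Δ) ∂volume
        = ∫⁻ l in Set.Ici Δ, τ x (Set.Ioi l) * EH⁻¹ * s.indicator 1 (x, l) ∂volume :=
    fun x => htrans (fun h => τ x (Set.Ioi h) * EH⁻¹ * s.indicator 1 (x, h)) Δ
  -- RHS as an iterated integral
  have hR : α s = ∫⁻ x, ∫⁻ l,
      (Set.Ici (0:ℝ)).indicator (fun l => τ x (Set.Ioi l) / EH) l * s.indicator 1 (x, l)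
        ∂volume ∂π := by
    rw [hα, withDensity_apply _ hs, ← lintegral_indicator hs,
      lintegral_prod _ ((hDm.indicator hs).aemeasurable)]
    refine lintegral_congr fun x => lintegral_congr fun l => ?_
    by_cases hm : (x, l) ∈ s
    · rw [Set.indicator_of_mem hm, Set.indicator_of_mem hm, Pi.one_apply, mul_one]
    · rw [Set.indicator_of_notMem hm, Set.indicator_of_notMem hm, mul_zero]
  have hdisj : Disjoint (Set.Ico (0:ℝ) Δ) (Set.Ici Δ) :=
    Set.disjoint_left.mpr fun l hl hl' => absurd hl' (not_le.mpr hl.2)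
  have hRinner : ∀ x : X,
      (∫⁻ l, (Set.Ici (0:ℝ)).indicator (fun l => τ x (Set.Ioi l) / EH) l * s.indicator 1 (x, l)
          ∂volume)
        = (∫⁻ l in Set.Ico (0:ℝ) Δ, EH⁻¹ * s.indicator 1 (x, l) ∂volume)
          + ∫⁻ l in Set.Ici Δ, τ x (Set.Ioi l) * EH⁻¹ * s.indicator 1 (x, l) ∂volume := by
    intro x
    have e1 : ∀ l : ℝ,
        (Set.Ici (0:ℝ)).indicator (fun l => τ x (Set.Ioi l) / EH) l * s.indicator 1 (x, l)
          = (Set.Ici (0:ℝ)).indicator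
              (fun l => τ x (Set.Ioi l) * EH⁻¹ * s.indicator 1 (x, l)) l := by
      intro l
      by_cases hl : l ∈ Set.Ici (0:ℝ)
      · rw [Set.indicator_of_mem hl, Set.indicator_of_mem hl, div_eq_mul_inv]
      · rw [Set.indicator_of_notMem hl, Set.indicator_of_notMem hl, zero_mul]
    simp_rw [e1]
    rw [lintegral_indicator measurableSet_Ici, ← Set.Ico_union_Ici_eq_Ici hΔ.le,
      lintegral_union measurableSet_Ici hdisj]
    congr 1
    refine setLIntegral_congr_fun measurableSet_Ico (fun l hl => ?_)
    rw [hτone x l (le_of_lt hl.2), one_mul]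
  have hmeasU1 : Measurable fun x : X =>
      ∫⁻ l in Set.Ico (0:ℝ) Δ, EH⁻¹ * s.indicator 1 (x, l) ∂volume := by
    apply Measurable.lintegral_prod_right' (ν := volume.restrict (Set.Ico (0:ℝ) Δ))
      (f := fun p : X × ℝ => EH⁻¹ * s.indicator 1 p)
    exact measurable_const.mul (measurable_one.indicator hs)
  have hRsplit : α s
      = (∫⁻ x, ∫⁻ l in Set.Ico (0:ℝ) Δ, EH⁻¹ * s.indicator 1 (x, l) ∂volume ∂π)
        + ∫⁻ x, ∫⁻ l in Set.Ici Δ, τ x (Set.Ioi l) * EH⁻¹ * s.indicator 1 (x, l) ∂volume ∂π := by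
    rw [hR]
    simp_rw [hRinner]
    exact lintegral_add_left hmeasU1 _
    -- measurability of the sliced marginal integrand
  have hWm : Measurable fun q : X × ℝ =>
      ∫⁻ h in Set.Ioi (0:ℝ), ENNReal.ofReal (f q.1 h) * K ((q.1, h), q.2) s ∂volume := by
    apply Measurable.lintegral_prod_right' (ν := volume.restrict (Set.Ioi (0:ℝ)))
      (f := fun q : (X × ℝ) × ℝ => ENNReal.ofReal (f q.1.1 q.2) * K ((q.1.1, q.2), q.1.2) s)
    exact ((ENNReal.measurable_ofReal.comp (hf.comp
        (measurable_fst.fst.prodMk measurable_snd))).mul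
      ((Kernel.measurable_coe K hs).comp
        ((measurable_fst.fst.prodMk measurable_snd).prodMk measurable_fst.snd)))
  have hWbind : ∀ (x : X) (lp : ℝ),
      (∫⁻ h in Set.Ioi (0:ℝ), ENNReal.ofReal (f x h) * K ((x, h), lp) s ∂volume)
        = ((τ x).bind (fun h => κ (x, h))) ((fun xp : X => (xp, lp)) ⁻¹' s) := by
    intro x lp
    rw [hm_apply x _ (hsl lp)]
    exact lintegral_congr fun h => by rw [hKslice]
  have hWint : ∀ lp : ℝ,
      (∫⁻ x, (∫⁻ h in Set.Ioi (0:ℝ), ENNReal.ofReal (f x h) * K ((x, h), lp) s ∂volume) ∂π)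
        = π ((fun xp : X => (xp, lp)) ⁻¹' s) := by
    intro lp
    calc (∫⁻ x, (∫⁻ h in Set.Ioi (0:ℝ), ENNReal.ofReal (f x h) * K ((x, h), lp) s ∂volume) ∂π)
        = ∫⁻ x, ((τ x).bind (fun h => κ (x, h))) ((fun xp : X => (xp, lp)) ⁻¹' s) ∂π :=
          lintegral_congr fun x => hWbind x lp
      _ = (π.bind (fun x => (τ x).bind (fun h => κ (x, h)))) ((fun xp : X => (xp, lp)) ⁻¹' s) :=
          (Measure.bind_apply (hsl lp) hm_meas.aemeasurable).symm
      _ = π ((fun xp : X => (xp, lp)) ⁻¹' s) := by rw [hinv]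
  -- key computation for the jump term
  have hstep : ∀ x : X, ∫⁻ l in Set.Ici (0:ℝ), Bs s x l ∂volume
      = ∫⁻ lp in Set.Ico (0:ℝ) Δ,
          (∫⁻ h in Set.Ioi (0:ℝ), ENNReal.ofReal (f x h) * K ((x, h), lp) s ∂volume) ∂volume := by
    intro x
    have hFm : Measurable fun q : ℝ × ℝ =>
        ENNReal.ofReal (f x (q.1 + Δ - q.2)) * K ((x, q.1 + Δ - q.2), q.2) s :=
      ((ENNReal.measurable_ofReal.comp (hf.comp (measurable_const.prodMk
          ((measurable_fst.add_const Δ).sub measurable_snd)))).mul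
        ((Kernel.measurable_coe K hs).comp ((measurable_const.prodMk
          ((measurable_fst.add_const Δ).sub measurable_snd)).prodMk measurable_snd)))
    have hswap : ∫⁻ l in Set.Ici (0:ℝ), Bs s x l ∂volume
        = ∫⁻ lp in Set.Ico (0:ℝ) Δ, ∫⁻ l in Set.Ici (0:ℝ),
            ENNReal.ofReal (f x (l + Δ - lp)) * K ((x, l + Δ - lp), lp) s ∂volume ∂volume :=
      lintegral_lintegral_swap (μ := volume.restrict (Set.Ici (0:ℝ)))
        (ν := volume.restrict (Set.Ico (0:ℝ) Δ)) hFm.aemeasurable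
    rw [hswap]
    refine setLIntegral_congr_fun measurableSet_Ico (fun lp hlp => ?_)
    have e2 : ∀ l : ℝ, l + Δ - lp = l + (Δ - lp) := fun l => by ring
    simp_rw [e2]
    rw [htrans (fun h => ENNReal.ofReal (f x h) * K ((x, h), lp) s) (Δ - lp)]
    have hg0 : ∀ h : ℝ, ENNReal.ofReal (f x h) * K ((x, h), lp) s
        = (Set.Ioi Δ).indicator (fun h => ENNReal.ofReal (f x h) * K ((x, h), lp) s) h := by
      intro h
      by_cases hh : h ∈ Set.Ioi Δ
      · rw [Set.indicator_of_mem hh]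
      · rw [Set.indicator_of_notMem hh, hmin x h (not_lt.mp hh), ENNReal.ofReal_zero, zero_mul]
    have hred : ∀ (S : Set ℝ), MeasurableSet S → Set.Ioi Δ ⊆ S →
        ∫⁻ h in S, ENNReal.ofReal (f x h) * K ((x, h), lp) s ∂volume
          = ∫⁻ h in Set.Ioi Δ, ENNReal.ofReal (f x h) * K ((x, h), lp) s ∂volume := by
      intro S hS hsub'
      rw [setLIntegral_congr_fun hS (fun h _ => hg0 h),
        lintegral_indicator measurableSet_Ioi, Measure.restrict_restrict measurableSet_Ioi,
        Set.inter_eq_left.mpr hsub']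
    rw [hred (Set.Ici (Δ - lp)) measurableSet_Ici
        (fun h hh => le_trans (show Δ - lp ≤ Δ by linarith [hlp.1]) (le_of_lt hh)),
      ← hred (Set.Ioi (0:ℝ)) measurableSet_Ioi (fun h hh => lt_trans hΔ hh)]
  -- slices of the indicator
  have hindslice : ∀ lp : ℝ,
      (∫⁻ x, s.indicator 1 (x, lp) ∂π) = π ((fun xp : X => (xp, lp)) ⁻¹' s) := by
    intro lp
    have e3 : ∀ x : X, s.indicator 1 (x, lp)
        = Set.indicator ((fun xp : X => (xp, lp)) ⁻¹' s) (1 : X → ℝ≥0∞) x := by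
      intro x
      by_cases hm : (x, lp) ∈ s
      · simp [Set.indicator_apply, hm]
      · simp [Set.indicator_apply, hm]
    simp_rw [e3]
    exact lintegral_indicator_one (hsl lp)
  have hinv_ne : EH⁻¹ ≠ ⊤ := by
    simp [ENNReal.inv_ne_top, hEH0]
  -- the key identity
  have key : (∫⁻ x, ∫⁻ l in Set.Ici (0:ℝ), EH⁻¹ * Bs s x l ∂volume ∂π)
      = ∫⁻ x, ∫⁻ l in Set.Ico (0:ℝ) Δ, EH⁻¹ * s.indicator 1 (x, l) ∂volume ∂π := by
    have hL' : (∫⁻ x, ∫⁻ l in Set.Ici (0:ℝ), EH⁻¹ * Bs s x l ∂volume ∂π)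
        = EH⁻¹ * ∫⁻ lp in Set.Ico (0:ℝ) Δ, π ((fun xp : X => (xp, lp)) ⁻¹' s) ∂volume := by
      calc (∫⁻ x, ∫⁻ l in Set.Ici (0:ℝ), EH⁻¹ * Bs s x l ∂volume ∂π)
          = ∫⁻ x, EH⁻¹ * ∫⁻ l in Set.Ici (0:ℝ), Bs s x l ∂volume ∂π :=
            lintegral_congr fun x => lintegral_const_mul' _ _ hinv_ne
        _ = EH⁻¹ * ∫⁻ x, ∫⁻ l in Set.Ici (0:ℝ), Bs s x l ∂volume ∂π :=
            lintegral_const_mul' _ _ hinv_ne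
        _ = EH⁻¹ * ∫⁻ x, ∫⁻ lp in Set.Ico (0:ℝ) Δ,
              (∫⁻ h in Set.Ioi (0:ℝ), ENNReal.ofReal (f x h) * K ((x, h), lp) s ∂volume)
                ∂volume ∂π := by rw [lintegral_congr hstep]
        _ = EH⁻¹ * ∫⁻ lp in Set.Ico (0:ℝ) Δ,
              (∫⁻ x, (∫⁻ h in Set.Ioi (0:ℝ), ENNReal.ofReal (f x h) * K ((x, h), lp) s ∂volume)
                ∂π) ∂volume := by
            rw [lintegral_lintegral_swap (μ := π) (ν := volume.restrict (Set.Ico (0:ℝ) Δ))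
              (f := fun x lp =>
                ∫⁻ h in Set.Ioi (0:ℝ), ENNReal.ofReal (f x h) * K ((x, h), lp) s ∂volume)
              hWm.aemeasurable]
        _ = EH⁻¹ * ∫⁻ lp in Set.Ico (0:ℝ) Δ, π ((fun xp : X => (xp, lp)) ⁻¹' s) ∂volume := by
            rw [lintegral_congr hWint]
    have hR' : (∫⁻ x, ∫⁻ l in Set.Ico (0:ℝ) Δ, EH⁻¹ * s.indicator 1 (x, l) ∂volume ∂π)
        = EH⁻¹ * ∫⁻ lp in Set.Ico (0:ℝ) Δ, π ((fun xp : X => (xp, lp)) ⁻¹' s) ∂volume := by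
      calc (∫⁻ x, ∫⁻ l in Set.Ico (0:ℝ) Δ, EH⁻¹ * s.indicator 1 (x, l) ∂volume ∂π)
          = ∫⁻ x, EH⁻¹ * ∫⁻ l in Set.Ico (0:ℝ) Δ, s.indicator 1 (x, l) ∂volume ∂π :=
            lintegral_congr fun x => lintegral_const_mul' _ _ hinv_ne
        _ = EH⁻¹ * ∫⁻ x, ∫⁻ l in Set.Ico (0:ℝ) Δ, s.indicator 1 (x, l) ∂volume ∂π :=
            lintegral_const_mul' _ _ hinv_ne
        _ = EH⁻¹ * ∫⁻ lp in Set.Ico (0:ℝ) Δ, (∫⁻ x, s.indicator 1 (x, lp) ∂π) ∂volume := by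
            rw [lintegral_lintegral_swap (μ := π) (ν := volume.restrict (Set.Ico (0:ℝ) Δ))
              (f := fun x lp => s.indicator 1 (x, lp))
              (measurable_one.indicator hs).aemeasurable]
        _ = EH⁻¹ * ∫⁻ lp in Set.Ico (0:ℝ) Δ, π ((fun xp : X => (xp, lp)) ⁻¹' s) ∂volume := by
            rw [lintegral_congr hindslice]
    rw [hL', hR']
  rw [hLsplit, hRsplit, key]
  congr 1
  exact lintegral_congr hT2
end
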